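/- arXiv:1301.3720 — 4 statements merged into one kernel-verified Lean document; each statement's English description precedes it below -/
import Mathlib

section
/- Let I be a conditional independence relation on a finite set V satisfying Strong Union and the Intersection property (in counter-positive form: ¬I(X,Y|Z) ∧ I(X,W|Z∪{Y}) → ¬I(X,Y|Z∪{W})), and suppose I satisfies the pairwise Markov property with respect to a graph G. Then for distinct X, Y, if ¬I(X, Y | MB(X)∖{Y}) holds and I(X, W | (MB(X)∖{Y})∪{Y}) holds for every W ∉ MB(X)∪{X}, then (X,Y) is an edge of G. -/
/-- Lemma 2 of the paper. -/
theorem lemma_edge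
    {V : Type*} [Fintype V] [DecidableEq V]
    (I : V → V → Finset V → Prop)
    (G : SimpleGraph V) [DecidableRel G.Adj]
    (hSU : ∀ (X Y W : V) (Z : Finset V), X ≠ Y → W ∉ Z → W ≠ X → W ≠ Y →
      I X Y Z → I X Y (insert W Z))
    (hInt : ∀ (X Y W : V) (Z : Finset V), X ≠ Y → X ≠ W → Y ≠ W →
      X ∉ Z → Y ∉ Z → W ∉ Z →
      ¬ I X Y Z → I X W (insert Y Z) → ¬ I X Y (insert W Z))
    (hPM : ∀ X Y : V, X ≠ Y →
      (¬ G.Adj X Y ↔ I X Y (Finset.univ \ {X, Y})))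
    (X Y : V) (hXY : X ≠ Y)
    (hdep : ¬ I X Y (G.neighborFinset X \ {Y}))
    (hind : ∀ W : V, W ∉ G.neighborFinset X → W ≠ X →
      I X W (insert Y (G.neighborFinset X \ {Y}))) :
    G.Adj X Y := by
  set base : Finset V := G.neighborFinset X \ {Y} with hbase
  have hXbase : X ∉ base := by
    simp [hbase, SimpleGraph.neighborFinset]
  have hYbase : Y ∉ base := by simp [hbase]
  -- Lemma A
  have lemA : ∀ T : Finset V, (∀ t ∈ T, t ∉ G.neighborFinset X ∧ t ≠ X ∧ t ≠ Y) →
      ∀ W, W ∉ G.neighborFinset X → W ≠ X → W ≠ Y → W ∉ T →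
      I X W (insert Y base ∪ T) := by
    intro T
    induction T using Finset.induction_on with
    | empty =>
      intro _ W hW hWX hWY _
      simpa using hind W hW hWX
    | @insert t T' htT' ih =>
      intro hT W hW hWX hWY hWT
      have ht := hT t (Finset.mem_insert_self t T')
      have hT' : ∀ s ∈ T', s ∉ G.neighborFinset X ∧ s ≠ X ∧ s ≠ Y :=
        fun s hs => hT s (Finset.mem_insert_of_mem hs)
      have hWt : W ≠ t := fun h => hWT (h ▸ Finset.mem_insert_self t T')
      have hWT' : W ∉ T' := fun h => hWT (Finset.mem_insert_of_mem h)
      have key : insert Y base ∪ insert t T' = insert t (insert Y base ∪ T') :=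
        Finset.union_insert ..
      rw [key]
      apply hSU X W t _ hWX.symm
      · intro hmem
        rcases Finset.mem_union.mp hmem with h | h
        · rcases Finset.mem_insert.mp h with h | h
          · exact ht.2.2 h
          · exact ht.1 (Finset.mem_sdiff.mp h).1
        · exact htT' h
      · exact ht.2.1
      · exact fun h => hWt h.symm
      · exact ih hT' W hW hWX hWY hWT'
  -- Lemma B
  have lemB : ∀ T : Finset V, (∀ t ∈ T, t ∉ G.neighborFinset X ∧ t ≠ X ∧ t ≠ Y) →
      ¬ I X Y (base ∪ T) := by
    intro T
    induction T using Finset.induction_on with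
    | empty => simpa using hdep
    | @insert t T' htT' ih =>
      intro hT
      have ht := hT t (Finset.mem_insert_self t T')
      have hT' : ∀ s ∈ T', s ∉ G.neighborFinset X ∧ s ≠ X ∧ s ≠ Y :=
        fun s hs => hT s (Finset.mem_insert_of_mem hs)
      have key : base ∪ insert t T' = insert t (base ∪ T') :=
        Finset.union_insert ..
      rw [key]
      have htZ : t ∉ base ∪ T' := by
        intro hmem
        rcases Finset.mem_union.mp hmem with h | h
        · exact ht.1 (Finset.mem_sdiff.mp h).1
        · exact htT' h
      have hXZ : X ∉ base ∪ T' := by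
        intro hmem
        rcases Finset.mem_union.mp hmem with h | h
        · exact hXbase h
        · exact (hT' X h).2.1 rfl
      have hYZ : Y ∉ base ∪ T' := by
        intro hmem
        rcases Finset.mem_union.mp hmem with h | h
        · exact hYbase h
        · exact (hT' Y h).2.2 rfl
      apply hInt X Y t (base ∪ T') hXY (fun h => ht.2.1 h.symm)
        (fun h => ht.2.2 h.symm) hXZ hYZ htZ (ih hT')
      rw [show insert Y (base ∪ T') = insert Y base ∪ T' from
        (Finset.insert_union ..).symm]
      exact lemA T' hT' t ht.1 ht.2.1 ht.2.2 htT'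
  -- conclude
  by_contra hAdj
  have hfull : base ∪ (Finset.univ \ (G.neighborFinset X ∪ {X, Y})) =
      Finset.univ \ {X, Y} := by
    have hXnb : X ∉ G.neighborFinset X := by simp
    ext s
    simp only [Finset.mem_union, Finset.mem_sdiff, Finset.mem_univ, true_and,
      Finset.mem_insert, Finset.mem_singleton, hbase, Finset.mem_sdiff]
    push_neg
    constructor
    · rintro (⟨hs, hsY⟩ | ⟨_, hsX, hsY⟩)
      · exact ⟨fun h => hXnb (h ▸ hs), hsY⟩
      · exact ⟨hsX, hsY⟩
    · rintro ⟨hsX, hsY⟩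
      by_cases h : s ∈ G.neighborFinset X
      · exact Or.inl ⟨h, hsY⟩
      · exact Or.inr ⟨h, hsX, hsY⟩
  have hI := (hPM X Y hXY).mp hAdj
  apply lemB (Finset.univ \ (G.neighborFinset X ∪ {X, Y}))
  · intro t ht
    simp only [Finset.mem_sdiff, Finset.mem_univ, true_and, Finset.mem_union,
      Finset.mem_insert, Finset.mem_singleton] at ht
    tauto
  · rw [hfull]; exact hI
end

section
/- Let I be a conditional independence relation on finite V satisfying Strong Union, Intersection, and the pairwise Markov property with respect to graph G. Define the Markov blanket closure C(G) as the set of assertions: for each X and each neighbor Y of X, the dependence assertion ¬I(X,Y|MB(X)∖{Y}); and for each X and each non-neighbor Y ≠ X, the independence assertion I(X,Y|MB(X)). Then C(G) completely determines G: for any graph G' on V such that I satisfies all the assertions in C(G'), we have G' = G. -/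
/-- the Markov blanket closure completely determines the structure. -/
theorem markov_blanket_closure_determines_structure
    {V : Type*} [Fintype V] [DecidableEq V]
    (I : V → V → Finset V → Prop)
    (G : SimpleGraph V) [DecidableRel G.Adj]
    (hSU : ∀ (X Y W : V) (Z : Finset V), X ≠ Y → W ∉ Z → W ≠ X → W ≠ Y →
      I X Y Z → I X Y (insert W Z))
    (hInt : ∀ (X Y W : V) (Z : Finset V), X ≠ Y → X ≠ W → Y ≠ W →
      X ∉ Z → Y ∉ Z → W ∉ Z →
      ¬ I X Y Z → I X W (insert Y Z) → ¬ I X Y (insert W Z))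
    (hPM : ∀ X Y : V, X ≠ Y →
      (¬ G.Adj X Y ↔ I X Y (Finset.univ \ {X, Y})))
    (G' : SimpleGraph V) [DecidableRel G'.Adj]
    (hdep : ∀ X Y : V, G'.Adj X Y → ¬ I X Y (G'.neighborFinset X \ {Y}))
    (hind : ∀ X Y : V, X ≠ Y → ¬ G'.Adj X Y → I X Y (G'.neighborFinset X)) :
    G' = G := by
  -- monotonicity of I from Strong Union
  have mono : ∀ (X Y : V) (Z Z' : Finset V), X ≠ Y → X ∉ Z' → Y ∉ Z' →
      Z ⊆ Z' → I X Y Z → I X Y Z' := by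
    intro X Y Z Z' hXY hX hY hsub hI
    have key : ∀ D : Finset V, X ∉ D → Y ∉ D → I X Y (Z ∪ D) := by
      intro D
      induction D using Finset.induction_on with
      | empty => intro _ _; simpa using hI
      | @insert a D ha ih =>
        intro hXa hYa
        simp only [Finset.mem_insert, not_or] at hXa hYa
        by_cases haZ : a ∈ Z ∪ D
        · have h1 : Z ∪ insert a D = Z ∪ D := by
            rw [Finset.union_insert, Finset.insert_eq_self.mpr haZ]
          rw [h1]; exact ih hXa.2 hYa.2
        · rw [Finset.union_insert]
          exact hSU X Y a (Z ∪ D) hXY haZ (Ne.symm hXa.1) (Ne.symm hYa.1)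
            (ih hXa.2 hYa.2)
    have h2 := key (Z' \ Z) (fun h => hX (Finset.mem_sdiff.mp h).1)
      (fun h => hY (Finset.mem_sdiff.mp h).1)
    rwa [Finset.union_sdiff_of_subset hsub] at h2
  ext X Y
  constructor
  · -- G'.Adj X Y → G.Adj X Y
    intro h'
    have hne : X ≠ Y := G'.ne_of_adj h'
    have hYN : Y ∈ G'.neighborFinset X := by
      rw [SimpleGraph.mem_neighborFinset]; exact h'
    set N : Finset V := G'.neighborFinset X \ {Y} with hN
    have hXN : X ∉ N := fun h => (G'.notMem_neighborFinset_self X)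
      (Finset.mem_sdiff.mp h).1
    have hYnotN : Y ∉ N := fun h => (Finset.mem_sdiff.mp h).2 (Finset.mem_singleton_self Y)
    have hNbr : G'.neighborFinset X = insert Y N := by
      ext z
      simp only [hN, Finset.mem_insert, Finset.mem_sdiff, Finset.mem_singleton]
      constructor
      · intro hz
        by_cases hzY : z = Y
        · exact Or.inl hzY
        · exact Or.inr ⟨hz, hzY⟩
      · rintro (rfl | ⟨hz, _⟩)
        · exact hYN
        · exact hz
    set M : Finset V := insert X (insert Y N) with hM
    have key : ∀ S : Finset V, ¬ I X Y (N ∪ (S \ M)) := by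
      intro S
      induction S using Finset.induction_on with
      | empty => simpa using hdep X Y h'
      | @insert a S haS ih =>
        by_cases haM : a ∈ M
        · have : insert a S \ M = S \ M := by
            rw [Finset.insert_sdiff_of_mem _ haM]
          rwa [this]
        · have haX : a ≠ X := fun h => haM (by rw [h, hM]; exact Finset.mem_insert_self _ _)
          have haY : a ≠ Y := fun h => haM (by
            rw [h, hM]; exact Finset.mem_insert_of_mem (Finset.mem_insert_self _ _))
          have haN : a ∉ N := fun h => haM (by
            rw [hM]; exact Finset.mem_insert_of_mem (Finset.mem_insert_of_mem h))
          set T : Finset V := N ∪ (S \ M) with hT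
          have hXT : X ∉ T := by
            intro h
            rcases Finset.mem_union.mp h with h | h
            · exact hXN h
            · exact (Finset.mem_sdiff.mp h).2 (Finset.mem_insert_self _ _)
          have hYT : Y ∉ T := by
            intro h
            rcases Finset.mem_union.mp h with h | h
            · exact hYnotN h
            · exact (Finset.mem_sdiff.mp h).2
                (Finset.mem_insert_of_mem (Finset.mem_insert_self _ _))
          have haT : a ∉ T := by
            intro h
            rcases Finset.mem_union.mp h with h | h
            · exact haN h
            · exact haS (Finset.mem_sdiff.mp h).1
          have hset : insert a S \ M = insert a (S \ M) :=
            Finset.insert_sdiff_of_notMem _ haM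
          rw [hset, Finset.union_insert]
          -- a is not a neighbor of X in G'
          have hnadj : ¬ G'.Adj X a := by
            intro h
            exact haN (Finset.mem_sdiff.mpr
              ⟨(SimpleGraph.mem_neighborFinset _ _ _).mpr h,
               by simp [haY]⟩)
          have hIXa : I X a (G'.neighborFinset X) := hind X a (Ne.symm haX) hnadj
          have hIXa' : I X a (insert Y T) := by
            apply mono X a (G'.neighborFinset X) (insert Y T) (Ne.symm haX)
            · simp [hne, hXT]
            · simp [haY, haT]
            · rw [hNbr]
              exact Finset.insert_subset_insert _ (Finset.subset_union_left)
            · exact hIXa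
          exact hInt X Y a T hne (Ne.symm haX) (Ne.symm haY) hXT hYT haT ih hIXa'
    have hfinal := key Finset.univ
    have hEq : N ∪ (Finset.univ \ M) = Finset.univ \ {X, Y} := by
      ext z
      simp only [Finset.mem_union, Finset.mem_sdiff, Finset.mem_univ, true_and,
        Finset.mem_insert, Finset.mem_singleton, hM, not_or]
      constructor
      · rintro (h | h)
        · exact ⟨fun hz => hXN (hz ▸ h), fun hz => hYnotN (hz ▸ h)⟩
        · exact ⟨h.1, h.2.1⟩
      · rintro ⟨h1, h2⟩
        by_cases hz : z ∈ N
        · exact Or.inl hz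
        · exact Or.inr ⟨h1, h2, hz⟩
    rw [hEq] at hfinal
    by_contra hadj
    exact hfinal ((hPM X Y hne).mp hadj)
  · -- G.Adj X Y → G'.Adj X Y
    intro h
    have hne : X ≠ Y := G.ne_of_adj h
    by_contra h'
    have hI : I X Y (G'.neighborFinset X) := hind X Y hne h'
    have hI2 : I X Y (Finset.univ \ {X, Y}) := by
      apply mono X Y (G'.neighborFinset X) _ hne (by simp) (by simp [hne]) _ hI
      intro z hz
      simp only [Finset.mem_sdiff, Finset.mem_univ, true_and, Finset.mem_insert,
        Finset.mem_singleton, not_or]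
      constructor
      · intro hzX; exact G'.notMem_neighborFinset_self X (hzX ▸ hz)
      · intro hzY
        exact h' ((SimpleGraph.mem_neighborFinset _ _ _).mp (hzY ▸ hz))
    exact ((hPM X Y hne).mpr hI2) h
end

section
/- Let I be a conditional independence relation on finite V satisfying Strong Union and Intersection. Fix distinct X,Y and a set Z ⊆ V∖{X,Y}. If ¬I(X,Y|Z) holds, and I(X,W|Z∪{Y}) holds for every W ∈ V∖(Z∪{X,Y}), then ¬I(X,Y|V∖{X,Y}) holds. -/
/-- Strong-union closure: independence extends to any superset avoiding the endpoints. -/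
lemma su_extend {V : Type*} [DecidableEq V]
    (I : V → V → Finset V → Prop)
    (hSU : ∀ (X Y W : V) (Z : Finset V), X ≠ Y → W ∉ Z → W ≠ X → W ≠ Y →
      I X Y Z → I X Y (insert W Z))
    (A B : V) (hAB : A ≠ B) :
    ∀ n (T T' : Finset V), (T' \ T).card = n → T ⊆ T' → A ∉ T' → B ∉ T' →
      I A B T → I A B T' := by
  intro n
  induction n with
  | zero =>
    intro T T' hcard hsub hA hB h
    have : T' \ T = ∅ := Finset.card_eq_zero.mp hcard
    have : T' ⊆ T := fun x hx => by
      by_contra hxT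
      exact absurd (Finset.mem_sdiff.mpr ⟨hx, hxT⟩) (by simp [this])
    have : T' = T := Finset.Subset.antisymm this hsub
    rwa [this]
  | succ n ih =>
    intro T T' hcard hsub hA hB h
    have hne : (T' \ T).Nonempty := by
      rw [← Finset.card_pos, hcard]; omega
    obtain ⟨w, hw⟩ := hne
    obtain ⟨hwT', hwT⟩ := Finset.mem_sdiff.mp hw
    have hwA : w ≠ A := fun e => hA (e ▸ hwT')
    have hwB : w ≠ B := fun e => hB (e ▸ hwT')
    have h2 : I A B (insert w T) := hSU A B w T hAB hwT hwA hwB h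
    refine ih (insert w T) T' ?_ ?_ hA hB h2
    · have : T' \ insert w T = (T' \ T).erase w := by
        ext x; simp [Finset.mem_sdiff, Finset.mem_erase, and_comm, or_comm]
        tauto
      rw [this, Finset.card_erase_of_mem hw, hcard]; omega
    · exact Finset.insert_subset hwT' hsub

/-- the iterated blanket-extension argument (core of Lemma 2). -/
theorem iterated_intersection_extension
    {V : Type*} [Fintype V] [DecidableEq V]
    (I : V → V → Finset V → Prop)
    (hSU : ∀ (X Y W : V) (Z : Finset V), X ≠ Y → W ∉ Z → W ≠ X → W ≠ Y →
      I X Y Z → I X Y (insert W Z))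
    (hInt : ∀ (X Y W : V) (Z : Finset V), X ≠ Y → X ≠ W → Y ≠ W →
      X ∉ Z → Y ∉ Z → W ∉ Z →
      ¬ I X Y Z → I X W (insert Y Z) → ¬ I X Y (insert W Z))
    (X Y : V) (hXY : X ≠ Y) (Z : Finset V) (hXZ : X ∉ Z) (hYZ : Y ∉ Z)
    (hdep : ¬ I X Y Z)
    (hind : ∀ W : V, W ∉ Z → W ≠ X → W ≠ Y → I X W (insert Y Z)) :
    ¬ I X Y (Finset.univ \ {X, Y}) := by
  set U : Finset V := Finset.univ \ {X, Y} with hU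
  have key : ∀ n (Z' : Finset V), (U \ Z').card = n → Z ⊆ Z' → X ∉ Z' → Y ∉ Z' →
      ¬ I X Y Z' → ¬ I X Y U := by
    intro n
    induction n with
    | zero =>
      intro Z' hcard hsub hX hY hdep'
      have hZ'U : Z' ⊆ U := fun x hx => by
        simp [hU, Finset.mem_sdiff]
        constructor
        · intro e; exact hX (e ▸ hx)
        · intro e; exact hY (e ▸ hx)
      have h0 : U \ Z' = ∅ := Finset.card_eq_zero.mp hcard
      have hUZ' : U ⊆ Z' := fun x hx => by
        by_contra hxZ
        exact absurd (Finset.mem_sdiff.mpr ⟨hx, hxZ⟩) (by simp [h0])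
      have : U = Z' := Finset.Subset.antisymm hUZ' hZ'U
      rwa [this]
    | succ n ih =>
      intro Z' hcard hsub hX hY hdep'
      have hne : (U \ Z').Nonempty := by rw [← Finset.card_pos, hcard]; omega
      obtain ⟨w, hw⟩ := hne
      obtain ⟨hwU, hwZ'⟩ := Finset.mem_sdiff.mp hw
      have hwXY : w ≠ X ∧ w ≠ Y := by
        have := (Finset.mem_sdiff.mp hwU).2
        simp at this; tauto
      have hwZ : w ∉ Z := fun h => hwZ' (hsub h)
      have hIXw : I X w (insert Y Z) := hind w hwZ hwXY.1 hwXY.2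
      have hIXw' : I X w (insert Y Z') := by
        refine su_extend I hSU X w (Ne.symm hwXY.1) _ _ _ rfl ?_ ?_ ?_ hIXw
        · exact Finset.insert_subset_insert _ hsub
        · simp [hXY, hX]
        · simp [hwXY.2, hwZ']
      have hdep2 : ¬ I X Y (insert w Z') :=
        hInt X Y w Z' hXY (Ne.symm hwXY.1) (Ne.symm hwXY.2) hX hY hwZ' hdep' hIXw'
      refine ih (insert w Z') ?_ (hsub.trans (Finset.subset_insert _ _)) ?_ ?_ hdep2
      · have : U \ insert w Z' = (U \ Z').erase w := by
          ext x; simp [Finset.mem_sdiff, Finset.mem_erase]; tauto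
        rw [this, Finset.card_erase_of_mem hw, hcard]; omega
      · simp [hX, hwXY.1]; exact fun e => hwXY.1 e.symm
      · simp [hY, hwXY.2]; exact fun e => hwXY.2 e.symm
  exact key _ Z rfl (le_refl _) hXZ hYZ hdep
end

section
/- Let P be a strictly positive distribution over finitely many discrete random variables. Then the conditional independence relation of P satisfies the Intersection property: if X ⟂ Y | Z∪{W} and X ⟂ W | Z∪{Y}, then X ⟂ {Y,W} | Z (in particular X ⟂ Y | Z). -/
open Finset

variable {ι : Type*} [Fintype ι] [DecidableEq ι]
  {α : ι → Type*} [∀ i, Fintype (α i)] [∀ i, DecidableEq (α i)]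

/-- Marginal of the joint mass function `P` on the coordinates in `A`,
evaluated at (the restriction to `A` of) the assignment `x`. -/
def marginal (P : (∀ i, α i) → ℝ) (A : Finset ι) (x : ∀ i, α i) : ℝ :=
  ∑ y ∈ Finset.univ.filter (fun y : ∀ i, α i => ∀ i ∈ A, y i = x i), P y

/-- Conditional independence of the sets of variables `A` and `B` given `S`,
expressed by the factorization of marginals of the joint mass function `P`. -/
def CondIndep (P : (∀ i, α i) → ℝ) (A B S : Finset ι) : Prop :=
  ∀ x : ∀ i, α i,
    marginal P (A ∪ B ∪ S) x * marginal P S x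
      = marginal P (A ∪ S) x * marginal P (B ∪ S) x

lemma marginal_pos (P : (∀ i, α i) → ℝ) (hpos : ∀ v, 0 < P v) (A : Finset ι)
    (x : ∀ i, α i) : 0 < marginal P A x := by
  apply Finset.sum_pos (fun y _ => hpos y)
  exact ⟨x, by simp⟩

lemma marginal_update (P : (∀ i, α i) → ℝ) {A : Finset ι} {j : ι} (hj : j ∉ A)
    (x : ∀ i, α i) (a : α j) :
    marginal P A (Function.update x j a) = marginal P A x := by
  unfold marginal
  congr 1
  ext y
  simp only [mem_filter, mem_univ, true_and]
  have hupd : ∀ i ∈ A, Function.update x j a i = x i := fun i hi =>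
    Function.update_of_ne (ne_of_mem_of_not_mem hi hj) _ _
  exact ⟨fun h i hi => (h i hi).trans (hupd i hi),
         fun h i hi => (h i hi).trans (hupd i hi).symm⟩

lemma marginal_sum (P : (∀ i, α i) → ℝ) {A : Finset ι} {j : ι} (hj : j ∉ A)
    (x : ∀ i, α i) :
    ∑ a : α j, marginal P (insert j A) (Function.update x j a) = marginal P A x := by
  unfold marginal
  rw [← Finset.sum_fiberwise (univ.filter fun y : ∀ i, α i => ∀ i ∈ A, y i = x i)
      (fun y => y j) P]
  refine Finset.sum_congr rfl fun a _ => ?_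
  congr 1
  ext y
  simp only [mem_filter, mem_univ, true_and, Finset.mem_insert]
  constructor
  · intro h
    refine ⟨fun i hi => ?_, ?_⟩
    · have := h i (Or.inr hi)
      rwa [Function.update_of_ne (ne_of_mem_of_not_mem hi hj)] at this
    · have := h j (Or.inl rfl)
      rwa [Function.update_self] at this
  · rintro ⟨hA, hja⟩ i hi
    rcases hi with rfl | hi
    · rw [hja, Function.update_self]
    · rw [hA i hi, Function.update_of_ne (ne_of_mem_of_not_mem hi hj)]

/-- a strictly positive distribution satisfies the Intersection
property: X ⟂ Y | Z∪{W} and X ⟂ W | Z∪{Y} imply X ⟂ {Y,W} | Z, and in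
particular X ⟂ Y | Z. -/
theorem positive_distribution_intersection
    (P : (∀ i, α i) → ℝ)
    (hpos : ∀ v, 0 < P v) (hsum : ∑ v, P v = 1)
    (X Y W : ι) (Z : Finset ι)
    (hXY : X ≠ Y) (hXW : X ≠ W) (hYW : Y ≠ W)
    (hXZ : X ∉ Z) (hYZ : Y ∉ Z) (hWZ : W ∉ Z)
    (h1 : CondIndep P {X} {Y} (insert W Z))
    (h2 : CondIndep P {X} {W} (insert Y Z)) :
    CondIndep P {X} {Y, W} Z ∧ CondIndep P {X} {Y} Z := by
  classical
  simp only [CondIndep, ← Finset.insert_eq, Finset.insert_union] at h1 h2 ⊢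
  -- normalize set in h2
  have hcomm : insert W (insert Y Z) = insert Y (insert W Z) := Finset.insert_comm _ _ _
  rw [hcomm] at h2
  -- non-membership facts
  have hYXWZ : Y ∉ insert X (insert W Z) := by
    simp [Ne.symm hXY, hYW, hYZ]
  have hYXZ : Y ∉ insert X Z := by simp [Ne.symm hXY, hYZ]
  have hYWZ : Y ∉ insert W Z := by simp [hYW, hYZ]
  have hWXYZ : W ∉ insert X (insert Y Z) := by simp [Ne.symm hXW, Ne.symm hYW, hWZ]
  have hWXZ : W ∉ insert X Z := by simp [Ne.symm hXW, hWZ]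
  have hWYZ : W ∉ insert Y Z := by simp [Ne.symm hYW, hWZ]
  -- key cancellation: m_{XWZ} m_{YZ} = m_{XYZ} m_{WZ}
  have key : ∀ x, marginal P (insert X (insert W Z)) x * marginal P (insert Y Z) x
      = marginal P (insert X (insert Y Z)) x * marginal P (insert W Z) x := by
    intro x
    have e1 := h1 x
    have e2 := h2 x
    have hD : marginal P (insert Y (insert W Z)) x ≠ 0 :=
      ne_of_gt (marginal_pos P hpos _ x)
    apply mul_right_cancel₀ hD
    linear_combination (-(marginal P (insert Y Z) x)) * e1 + (marginal P (insert W Z) x) * e2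
  -- X ⟂ W | Z
  have hA : ∀ x, marginal P (insert X (insert W Z)) x * marginal P Z x
      = marginal P (insert X Z) x * marginal P (insert W Z) x := by
    intro x
    have hs1 : ∑ b : α Y, marginal P (insert Y Z) (Function.update x Y b) = marginal P Z x :=
      marginal_sum P hYZ x
    have hs2 : ∑ b : α Y, marginal P (insert Y (insert X Z)) (Function.update x Y b)
        = marginal P (insert X Z) x := marginal_sum P hYXZ x
    calc marginal P (insert X (insert W Z)) x * marginal P Z x
        = ∑ b : α Y, marginal P (insert X (insert W Z)) (Function.update x Y b)
            * marginal P (insert Y Z) (Function.update x Y b) := by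
          rw [← hs1, Finset.mul_sum]
          exact Finset.sum_congr rfl fun b _ => by
            rw [marginal_update P hYXWZ]
      _ = ∑ b : α Y, marginal P (insert Y (insert X Z)) (Function.update x Y b)
            * marginal P (insert W Z) (Function.update x Y b) := by
          refine Finset.sum_congr rfl fun b _ => ?_
          rw [← Finset.insert_comm X Y Z]
          exact key _
      _ = marginal P (insert X Z) x * marginal P (insert W Z) x := by
          rw [← hs2, Finset.sum_mul]
          exact Finset.sum_congr rfl fun b _ => by
            rw [marginal_update P hYWZ]
  -- first conclusion
  have goal1 : ∀ x, marginal P (insert X (insert Y (insert W Z))) x * marginal P Z x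
      = marginal P (insert X Z) x * marginal P (insert Y (insert W Z)) x := by
    intro x
    have e1 := h1 x
    have hB : marginal P (insert W Z) x ≠ 0 := ne_of_gt (marginal_pos P hpos _ x)
    apply mul_right_cancel₀ hB
    linear_combination (marginal P Z x) * e1 + (marginal P (insert Y (insert W Z)) x) * hA x
  -- second conclusion by summing over W
  have goal2 : ∀ x, marginal P (insert X (insert Y Z)) x * marginal P Z x
      = marginal P (insert X Z) x * marginal P (insert Y Z) x := by
    intro x
    have hs1 : ∑ c : α W, marginal P (insert W (insert X (insert Y Z))) (Function.update x W c)
        = marginal P (insert X (insert Y Z)) x := marginal_sum P hWXYZ x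
    have hs2 : ∑ c : α W, marginal P (insert W (insert Y Z)) (Function.update x W c)
        = marginal P (insert Y Z) x := marginal_sum P hWYZ x
    calc marginal P (insert X (insert Y Z)) x * marginal P Z x
        = ∑ c : α W, marginal P (insert W (insert X (insert Y Z))) (Function.update x W c)
            * marginal P Z (Function.update x W c) := by
          rw [← hs1, Finset.sum_mul]
          exact Finset.sum_congr rfl fun c _ => by rw [marginal_update P hWZ]
      _ = ∑ c : α W, marginal P (insert X Z) (Function.update x W c)
            * marginal P (insert W (insert Y Z)) (Function.update x W c) := by
          refine Finset.sum_congr rfl fun c _ => ?_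
          rw [Finset.insert_comm W X (insert Y Z), Finset.insert_comm W Y Z]
          exact goal1 _
      _ = marginal P (insert X Z) x * marginal P (insert Y Z) x := by
          rw [← hs2, Finset.mul_sum]
          exact Finset.sum_congr rfl fun c _ => by rw [marginal_update P hWXZ]
  exact ⟨goal1, goal2⟩
end
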